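/- For any point W in the Grassmannian G(2,n) represented by a 2×n matrix with columns (x_i, y_i), and any indices 1 ≤ i_1 < ... < i_{d+1} ≤ n, the (d+1)×(d+1) minor of the Veronese image matrix (whose j-th column is (x_j^d, x_j^{d-1}y_j, ..., y_j^d)) on columns i_1,...,i_{d+1} equals the product over all pairs 1 ≤ a < b ≤ d+1 of the 2×2 minors x_{i_a} y_{i_b} - x_{i_b} y_{i_a}. -/

import Mathlib

open Finset Matrix

private lemma swap_Iio_Ioi {M : Type*} [CommMonoid M] {d : ℕ}
    (f : Fin (d + 1) → Fin (d + 1) → M) :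
    ∏ b : Fin (d + 1), ∏ a ∈ Finset.Iio b, f a b
      = ∏ a : Fin (d + 1), ∏ b ∈ Finset.Ioi a, f a b := by
  exact Finset.prod_comm' (s := Finset.univ) (t := Finset.Iio) (t' := Finset.univ)
    (s' := Finset.Ioi) (fun b a => by simp [And.comm]) (f := fun b a => f a b)

private lemma prod_pairs {M : Type*} [CommMonoid M] {d : ℕ} (f : Fin (d + 1) → M) :
    (∏ b : Fin (d + 1), ∏ a ∈ Finset.Iio b, f a) * (∏ b : Fin (d + 1), ∏ _a ∈ Finset.Iio b, f b)
      = ∏ j : Fin (d + 1), f j ^ d := by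
  have hA : (∏ b : Fin (d + 1), ∏ a ∈ Finset.Iio b, f a)
      = ∏ a : Fin (d + 1), f a ^ (d - (a : ℕ)) := by
    rw [swap_Iio_Ioi (fun a _ => f a)]
    simp
  have hB : (∏ b : Fin (d + 1), ∏ _a ∈ Finset.Iio b, f b)
      = ∏ b : Fin (d + 1), f b ^ (b : ℕ) := by simp
  rw [hA, hB, ← Finset.prod_mul_distrib]
  exact Finset.prod_congr rfl fun j _ => pow_sub_mul_pow _ (Fin.is_le j)

private lemma lemA {F : Type*} [Field F] (d : ℕ) (x y : Fin (d + 1) → F)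
    (hx : ∀ j, x j ≠ 0) :
    (Matrix.of fun (k j : Fin (d + 1)) => x j ^ (d - (k : ℕ)) * y j ^ (k : ℕ)).det
      = ∏ b : Fin (d + 1), ∏ a ∈ Finset.Iio b, (x a * y b - x b * y a) := by
  set t : Fin (d + 1) → F := fun j => y j / x j with ht
  have key : (Matrix.of fun (k j : Fin (d + 1)) => x j ^ (d - (k : ℕ)) * y j ^ (k : ℕ))
      = (Matrix.vandermonde t)ᵀ * Matrix.diagonal (fun j => x j ^ d) := by
    ext k j
    have hk : (k : ℕ) ≤ d := Fin.is_le k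
    rw [Matrix.mul_diagonal]
    simp only [Matrix.transpose_apply, Matrix.vandermonde_apply, Matrix.of_apply, ht, div_pow]
    rw [div_mul_eq_mul_div, eq_comm, div_eq_iff (pow_ne_zero _ (hx j)),
      ← pow_sub_mul_pow (x j) hk]
    ring
  rw [key, Matrix.det_mul, Matrix.det_transpose, Matrix.det_vandermonde,
    Matrix.det_diagonal]
  have hterm : ∀ b : Fin (d + 1), ∀ a ∈ Finset.Iio b,
      x a * y b - x b * y a = (x a * x b) * (t b - t a) := by
    intro b a _
    have ha := hx a
    have hb := hx b
    simp only [ht]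
    field_simp
  rw [Finset.prod_congr rfl fun b _ => Finset.prod_congr rfl (hterm b)]
  simp only [Finset.prod_mul_distrib]
  rw [prod_pairs, swap_Iio_Ioi (fun a b => t b - t a)]
  ring

private lemma lemB {R : Type*} [CommRing R] (d : ℕ) (x y : Fin (d + 1) → R) :
    (Matrix.of fun (k j : Fin (d + 1)) => x j ^ (d - (k : ℕ)) * y j ^ (k : ℕ)).det
      = ∏ b : Fin (d + 1), ∏ a ∈ Finset.Iio b, (x a * y b - x b * y a) := by
  classical
  set S := MvPolynomial (Fin (d + 1) × Bool) ℤ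
  set F := FractionRing S
  set X : Fin (d + 1) → S := fun j => MvPolynomial.X (j, true) with hX
  set Y : Fin (d + 1) → S := fun j => MvPolynomial.X (j, false) with hY
  have hinj : Function.Injective (algebraMap S F) := IsFractionRing.injective S F
  have h1 := lemA d (fun j => algebraMap S F (X j)) (fun j => algebraMap S F (Y j))
    (fun j => (map_ne_zero_iff _ hinj).mpr (MvPolynomial.X_ne_zero _))
  have hS : (Matrix.of fun (k j : Fin (d + 1)) => X j ^ (d - (k : ℕ)) * Y j ^ (k : ℕ)).det
      = ∏ b : Fin (d + 1), ∏ a ∈ Finset.Iio b, (X a * Y b - X b * Y a) := by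
    apply hinj
    rw [RingHom.map_det]
    have hm : (algebraMap S F).mapMatrix
        (Matrix.of fun (k j : Fin (d + 1)) => X j ^ (d - (k : ℕ)) * Y j ^ (k : ℕ))
        = Matrix.of fun (k j : Fin (d + 1)) =>
            (algebraMap S F (X j)) ^ (d - (k : ℕ)) * (algebraMap S F (Y j)) ^ (k : ℕ) := by
      ext k j
      simp [RingHom.mapMatrix_apply]
    rw [hm, h1]
    simp only [map_prod, map_sub, _root_.map_mul]
  let φ : S →+* R := MvPolynomial.eval₂Hom (Int.castRingHom R)
    (fun p => if p.2 then x p.1 else y p.1)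
  have hφX : ∀ j, φ (X j) = x j := fun j => by
    rw [hX, MvPolynomial.eval₂Hom_X']; simp
  have hφY : ∀ j, φ (Y j) = y j := fun j => by
    rw [hY, MvPolynomial.eval₂Hom_X']; simp
  have h2 := congrArg φ hS
  rw [RingHom.map_det] at h2
  have hm2 : φ.mapMatrix (Matrix.of fun (k j : Fin (d + 1)) =>
      X j ^ (d - (k : ℕ)) * Y j ^ (k : ℕ))
      = Matrix.of fun (k j : Fin (d + 1)) => x j ^ (d - (k : ℕ)) * y j ^ (k : ℕ) := by
    ext k j
    simp [RingHom.mapMatrix_apply, hφX, hφY]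
  rw [hm2] at h2
  rw [h2]
  simp only [map_prod, map_sub, _root_.map_mul, hφX, hφY]

/-- generalized Vandermonde identity.
For a 2×n matrix with columns `(x j, y j)` over a field, and strictly increasing
column indices `i : Fin (d+1) → Fin n`, the maximal minor of the d-th Veronese
image matrix (whose row `k` has entries `x j ^ (d-k) * y j ^ k`) on those columns
equals the product of the 2×2 minors `x (i a) * y (i b) - x (i b) * y (i a)`
over all pairs `a < b`. -/
theorem veronese_minor_eq_prod_two_minors (K : Type*) [Field K] (d n : ℕ)
    (x y : Fin n → K) (i : Fin (d + 1) → Fin n) (hi : StrictMono i) :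
    (Matrix.of fun (k j : Fin (d + 1)) =>
        x (i j) ^ (d - (k : ℕ)) * y (i j) ^ (k : ℕ)).det =
      ∏ b : Fin (d + 1), ∏ a ∈ Finset.Iio b,
        (x (i a) * y (i b) - x (i b) * y (i a)) := by
  exact lemB d (fun a => x (i a)) (fun a => y (i a))
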